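/- Let R ≥ 2|b| and let X = H^∞(E_R) be the Banach space of bounded holomorphic functions on E_R = {z ∈ ℂ : Re z > 0, |z| > R} with the sup norm. Then the map T defined by (Th)(z) = 1 + ∫_{Γ_z} e^{2ξ} (∫_{Γ_ξ} (b e^{-2η}/η²) h(η) dη) dξ, where Γ_z = {tz : t ∈ [1,∞)}, is a well-defined contraction on X with Lipschitz constant |b|/R ≤ 1/2, and hence has a unique fixed point h₀ ∈ X satisfying ‖h₀ - 1‖_X ≤ 1. -/

import Mathlib

open MeasureTheory Set Metric Filter Complex Topology

namespace Stmt3Aux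

variable {b R : ℝ}

def ES (R : ℝ) : Set ℂ := {z | 0 < z.re ∧ R < ‖z‖}

lemma isOpen_ES (R : ℝ) : IsOpen (ES R) :=
  (isOpen_lt continuous_const Complex.continuous_re).inter
    (isOpen_lt continuous_const continuous_norm)

lemma mem_ES_smul (hR0 : 0 < R) {z : ℂ} (hz : z ∈ ES R) {s : ℝ} (hs : 1 ≤ s) :
    (s : ℂ) * z ∈ ES R := by
  obtain ⟨h1, h2⟩ := hz
  have hs0 : (0:ℝ) < s := lt_of_lt_of_le one_pos hs
  constructor
  · simp only [Complex.mul_re, Complex.ofReal_re, Complex.ofReal_im, zero_mul, sub_zero]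
    positivity
  · simp only [norm_mul, Complex.norm_real, Real.norm_eq_abs, abs_of_pos hs0]
    calc R = 1 * R := (one_mul R).symm
    _ < s * ‖z‖ := by
        apply mul_lt_mul' hs h2 hR0.le hs0

lemma ES_ne_zero (hR0 : 0 < R) {z : ℂ} (hz : z ∈ ES R) : z ≠ 0 := by
  intro h
  have := hz.2
  rw [h] at this
  simp only [map_zero, norm_zero] at this
  linarith

lemma abs_pos_ES (hR0 : 0 < R) {z : ℂ} (hz : z ∈ ES R) : 0 < ‖z‖ :=
  lt_trans hR0 hz.2

lemma mem_ES_add_real (hR0 : 0 < R) {z : ℂ} (hz : z ∈ ES R) {δ : ℝ} (hδ : 0 < δ) :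
    z + (δ:ℂ) ∈ ES R := by
  obtain ⟨h1, h2⟩ := hz
  constructor
  · simp only [Complex.add_re, Complex.ofReal_re]; linarith
  · have e1 : (‖z‖)^2 < (‖z + (δ:ℂ)‖)^2 := by
      rw [Complex.sq_norm, Complex.sq_norm, Complex.normSq_apply, Complex.normSq_apply]
      simp only [Complex.add_re, Complex.add_im, Complex.ofReal_re, Complex.ofReal_im, add_zero]
      nlinarith
    nlinarith [norm_nonneg (z + (δ:ℂ)), norm_nonneg z]

/-! ### elementary integrals -/

lemma rpow_neg_two {x : ℝ} (hx0 : 0 < x) : x ^ (-2:ℝ) = (x^2)⁻¹ := by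
  rw [show (-2:ℝ) = ((-2:ℤ):ℝ) by norm_num, Real.rpow_intCast]
  simp [zpow_neg]

lemma integrableOn_inv_sq : IntegrableOn (fun s:ℝ => (s^2)⁻¹) (Ici (1:ℝ)) := by
  rw [integrableOn_Ici_iff_integrableOn_Ioi]
  have h := integrableOn_Ioi_rpow_of_lt (show (-2:ℝ) < -1 by norm_num) one_pos
  apply h.congr_fun ?_ measurableSet_Ioi
  intro x hx
  exact rpow_neg_two (lt_trans one_pos hx)

lemma integral_inv_sq : (∫ s in Ici (1:ℝ), (s^2)⁻¹) = 1 := by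
  rw [MeasureTheory.integral_Ici_eq_integral_Ioi]
  have h : (∫ s in Ioi (1:ℝ), (s^2)⁻¹) = ∫ s in Ioi (1:ℝ), s ^ (-2:ℝ) := by
    apply setIntegral_congr_fun measurableSet_Ioi
    intro x hx
    exact (rpow_neg_two (lt_trans one_pos hx)).symm
  rw [h, integral_Ioi_rpow_of_lt (by norm_num) one_pos]
  norm_num

lemma integral_exp_neg_mul_Ioi {a c : ℝ} (hc : 0 < c) :
    ∫ s in Ioi a, Real.exp (-(c*s)) = Real.exp (-(c*a))/c := by
  have H : ∀ s : ℝ, HasDerivAt (fun s : ℝ => -Real.exp (-(c*s))/c) (Real.exp (-(c*s))) s := by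
    intro s
    have h1 : HasDerivAt (fun s : ℝ => -(c*s)) (-c) s := by
      simpa using ((hasDerivAt_id s).const_mul c).fun_neg
    have h2 := (Real.hasDerivAt_exp (-(c*s))).comp s h1
    have h3 := (h2.div_const c).fun_neg
    rw [show (fun s : ℝ => -Real.exp (-(c*s))/c) = fun i => -((Real.exp ∘ fun s => -(c * s)) i / c) by
      funext u; simp [Function.comp]; ring]
    refine h3.congr_deriv ?_
    field_simp
  have hint : IntegrableOn (fun s => Real.exp (-(c*s))) (Ioi a) := by
    have := exp_neg_integrableOn_Ioi a hc
    apply this.congr_fun _ measurableSet_Ioi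
    intro x _; ring_nf
  have htend : Tendsto (fun s : ℝ => -Real.exp (-(c*s))/c) atTop (𝓝 0) := by
    have h1 : Tendsto (fun s : ℝ => -(c*s)) atTop atBot :=
      tendsto_neg_atBot_iff.mpr (Tendsto.const_mul_atTop hc tendsto_id)
    have h2 : Tendsto (fun s : ℝ => Real.exp (-(c*s))) atTop (𝓝 0) :=
      Real.tendsto_exp_atBot.comp h1
    have h3 := (h2.neg).div_const c
    simpa using h3
  have := integral_Ioi_of_hasDerivAt_of_tendsto
    (Continuous.continuousWithinAt (by continuity)) (fun x _ => H x) hint htend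
  rw [this]
  field_simp
  ring

/-! ### the kernels -/

noncomputable def cf (b : ℝ) (z : ℂ) (h : ℂ → ℂ) (s : ℝ) : ℂ :=
  ((b : ℂ) * Complex.exp (-2*(s:ℂ)*z) / ((s:ℂ)*z)^2 * h ((s:ℂ)*z)) * z

noncomputable def ker (b : ℝ) (z : ℂ) (s : ℝ) : ℂ :=
  (b : ℂ) / (2 * (s:ℂ)^2 * z) * (1 - Complex.exp (2*z*(1-(s:ℂ))))

lemma norm_ker_le (hR0 : 0 < R) {z : ℂ} (hz : z ∈ ES R) {s : ℝ} (hs : 1 ≤ s) :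
    ‖ker b z s‖ ≤ |b| / R * (s^2)⁻¹ := by
  have hs0 : (0:ℝ) < s := lt_of_lt_of_le one_pos hs
  have habs : ‖z‖ ≠ 0 := by
    have := hR0.trans hz.2; exact this.ne'
  have h1 : ‖(b:ℂ) / (2 * (s:ℂ)^2 * z)‖ = |b| / (2 * s^2 * ‖z‖) := by
    simp [map_div₀, map_mul, Complex.norm_real, abs_of_pos hs0,
      abs_of_pos, sq_abs]
  have h2 : ‖1 - Complex.exp (2*z*(1-(s:ℂ)))‖ ≤ 2 := by
    refine (norm_sub_le _ _).trans ?_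
    have : ‖Complex.exp (2*z*(1-(s:ℂ)))‖ ≤ 1 := by
      rw [Complex.norm_exp]
      apply Real.exp_le_one_iff.mpr
      have hre : (2*z*(1-(s:ℂ))).re = 2 * z.re * (1 - s) := by
        simp [Complex.mul_re, Complex.mul_im, Complex.ofReal_re, Complex.ofReal_im]
      rw [hre]
      nlinarith [hz.1]
    have h1 : ‖(1:ℂ)‖ = 1 := by simp
    rw [h1] at *
    linarith [this]
  calc ‖ker b z s‖ = ‖(b:ℂ) / (2 * (s:ℂ)^2 * z)‖ * ‖1 - Complex.exp (2*z*(1-(s:ℂ)))‖ :=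
        norm_mul _ _
    _ ≤ |b| / (2 * s^2 * ‖z‖) * 2 := by
        rw [h1]; apply mul_le_mul_of_nonneg_left h2; positivity
    _ = |b| / (s^2 * ‖z‖) := by field_simp
    _ ≤ |b| / (s^2 * R) := by
        have hzR : R ≤ ‖z‖ := hz.2.le
        gcongr
    _ = |b| / R * (s^2)⁻¹ := by field_simp [mul_comm]

lemma contOn_cf {z : ℂ} (hR0 : 0 < R) (hz : z ∈ ES R) {h : ℂ → ℂ}
    (hcont : ContinuousOn h (ES R)) : ContinuousOn (cf b z h) (Ici 1) := by
  have hmaps : MapsTo (fun s : ℝ => (s:ℂ)*z) (Ici 1) (ES R) :=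
    fun s hs => mem_ES_smul hR0 hz hs
  have hc1 : ContinuousOn (fun s : ℝ => (s:ℂ)*z) (Ici 1) :=
    (Complex.continuous_ofReal.mul continuous_const).continuousOn
  have hch : ContinuousOn (fun s : ℝ => h ((s:ℂ)*z)) (Ici 1) := hcont.comp hc1 hmaps
  have hexp : ContinuousOn (fun s : ℝ => Complex.exp (-2*(s:ℂ)*z)) (Ici 1) :=
    (Complex.continuous_exp.comp ((continuous_const.mul Complex.continuous_ofReal).mul
      continuous_const)).continuousOn
  have hne : ∀ s ∈ Ici (1:ℝ), ((s:ℂ)*z)^2 ≠ 0 := fun s hs =>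
    pow_ne_zero 2 (ES_ne_zero hR0 (mem_ES_smul hR0 hz hs))
  exact ((((continuousOn_const.mul hexp).div
    ((hc1.pow 2)) hne).mul hch).mul continuousOn_const)

lemma norm_cf_le (hR0 : 0 < R) {z : ℂ} (hz : z ∈ ES R) {h : ℂ → ℂ} {C : ℝ}
    (hC : ∀ w ∈ ES R, ‖h w‖ ≤ C) {s : ℝ} (hs : 1 ≤ s) :
    ‖cf b z h s‖ ≤ |b| * C / R * (Real.exp (-(2*z.re)*s) * (s^2)⁻¹) := by
  have hs0 : (0:ℝ) < s := lt_of_lt_of_le one_pos hs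
  have hC0 : 0 ≤ C := le_trans (norm_nonneg _) (hC z hz)
  have habs : 0 < ‖z‖ := abs_pos_ES hR0 hz
  have hre : (-2*(s:ℂ)*z).re = -(2*z.re)*s := by
    simp [Complex.mul_re, Complex.mul_im]
    ring
  have e1 : ‖cf b z h s‖
      = |b| * Real.exp (-(2*z.re)*s) / (s^2 * (‖z‖)^2) * ‖h ((s:ℂ)*z)‖
        * ‖z‖ := by
    rw [cf, norm_mul, norm_mul, norm_div, norm_mul, norm_pow, norm_mul]
    simp only [Complex.norm_real, Real.norm_eq_abs, Complex.norm_exp, hre,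
      abs_of_pos hs0, Complex.norm_natCast]
    rw [mul_pow]
  rw [e1]
  have e2 : |b| * Real.exp (-(2*z.re)*s) / (s^2 * (‖z‖)^2) * ‖h ((s:ℂ)*z)‖
        * ‖z‖
      = (|b| * Real.exp (-(2*z.re)*s) * (s^2)⁻¹) * (‖h ((s:ℂ)*z)‖ / ‖z‖) := by
    field_simp
  rw [e2]
  calc (|b| * Real.exp (-(2*z.re)*s) * (s^2)⁻¹) * (‖h ((s:ℂ)*z)‖ / ‖z‖)
      ≤ (|b| * Real.exp (-(2*z.re)*s) * (s^2)⁻¹) * (C / R) := by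
        apply mul_le_mul_of_nonneg_left _ (by positivity)
        exact div_le_div₀ hC0 (hC _ (mem_ES_smul hR0 hz hs)) hR0 hz.2.le
    _ = |b| * C / R * (Real.exp (-(2*z.re)*s) * (s^2)⁻¹) := by ring

lemma integrableOn_cf (hR0 : 0 < R) {z : ℂ} (hz : z ∈ ES R) {h : ℂ → ℂ} {C : ℝ}
    (hcont : ContinuousOn h (ES R)) (hC : ∀ w ∈ ES R, ‖h w‖ ≤ C) :
    IntegrableOn (cf b z h) (Ici 1) := by
  have hx : 0 < z.re := hz.1
  have hC0 : 0 ≤ C := le_trans (norm_nonneg _) (hC z hz)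
  have hexpint : IntegrableOn (fun s : ℝ => |b| * C / R * Real.exp (-(2*z.re)*s)) (Ici 1) := by
    have h0 : IntegrableOn (fun s : ℝ => Real.exp (-(2*z.re)*s)) (Ici 1) :=
      (integrableOn_Ici_iff_integrableOn_Ioi (f := fun s : ℝ => Real.exp (-(2*z.re)*s)) (b := 1)).mpr (exp_neg_integrableOn_Ioi 1 (by positivity))
    exact h0.const_mul _
  apply Integrable.mono' hexpint
    ((contOn_cf hR0 hz hcont).aestronglyMeasurable measurableSet_Ici)
  rw [ae_restrict_iff' measurableSet_Ici]
  apply ae_of_all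
  intro s hs
  have hs0 : (0:ℝ) < s := lt_of_lt_of_le one_pos hs
  refine (norm_cf_le hR0 hz hC hs).trans ?_
  have h1 : (s^2)⁻¹ ≤ 1 := by
    rw [inv_le_one_iff₀]
    right; nlinarith [mem_Ici.mp hs]
  have h2 : 0 < Real.exp (-(2*z.re)*s) := Real.exp_pos _
  calc |b| * C / R * (Real.exp (-(2*z.re)*s) * (s^2)⁻¹)
      ≤ |b| * C / R * (Real.exp (-(2*z.re)*s) * 1) := by
        apply mul_le_mul_of_nonneg_left _ (by positivity)
        exact mul_le_mul_of_nonneg_left h1 h2.le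
    _ = |b| * C / R * Real.exp (-(2*z.re)*s) := by ring

lemma contOn_ker_mul {z : ℂ} (hR0 : 0 < R) (hz : z ∈ ES R) {h : ℂ → ℂ}
    (hcont : ContinuousOn h (ES R)) :
    ContinuousOn (fun s : ℝ => ker b z s * h ((s:ℂ)*z)) (Ici 1) := by
  have hmaps : MapsTo (fun s : ℝ => (s:ℂ)*z) (Ici 1) (ES R) :=
    fun s hs => mem_ES_smul hR0 hz hs
  have hc1 : ContinuousOn (fun s : ℝ => (s:ℂ)*z) (Ici 1) :=
    (Complex.continuous_ofReal.mul continuous_const).continuousOn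
  have hch : ContinuousOn (fun s : ℝ => h ((s:ℂ)*z)) (Ici 1) := hcont.comp hc1 hmaps
  have hne : ∀ s ∈ Ici (1:ℝ), 2 * (s:ℂ)^2 * z ≠ 0 := by
    intro s hs
    have hs0 : (0:ℝ) < s := lt_of_lt_of_le one_pos hs
    have : (s:ℂ) ≠ 0 := by exact_mod_cast hs0.ne'
    exact mul_ne_zero (mul_ne_zero two_ne_zero (pow_ne_zero 2 this)) (ES_ne_zero hR0 hz)
  have hker : ContinuousOn (fun s : ℝ => ker b z s) (Ici 1) := by
    unfold ker
    apply ContinuousOn.mul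
    · exact continuousOn_const.div
        ((continuous_const.mul ((Complex.continuous_ofReal.pow 2))).mul
          continuous_const).continuousOn hne
    · apply continuousOn_const.sub
      exact (Complex.continuous_exp.comp (continuous_const.mul
        (continuous_const.sub Complex.continuous_ofReal))).continuousOn
  exact hker.mul hch

lemma integrableOn_ker_mul (hR0 : 0 < R) {z : ℂ} (hz : z ∈ ES R) {h : ℂ → ℂ} {C : ℝ}
    (hcont : ContinuousOn h (ES R)) (hC : ∀ w ∈ ES R, ‖h w‖ ≤ C) :
    IntegrableOn (fun s : ℝ => ker b z s * h ((s:ℂ)*z)) (Ici 1) := by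
  apply Integrable.mono' ((integrableOn_inv_sq.const_mul (|b| / R * C)))
    ((contOn_ker_mul hR0 hz hcont).aestronglyMeasurable measurableSet_Ici)
  rw [ae_restrict_iff' measurableSet_Ici]
  apply ae_of_all
  intro s hs
  rw [norm_mul]
  calc ‖ker b z s‖ * ‖h ((s:ℂ)*z)‖ ≤ (|b| / R * (s^2)⁻¹) * C :=
        mul_le_mul (norm_ker_le hR0 hz hs) (hC _ (mem_ES_smul hR0 hz hs)) (norm_nonneg _)
          (by positivity)
    _ = |b| / R * C * (s^2)⁻¹ := by ring

lemma norm_integral_ker_mul_le (hR0 : 0 < R) {z : ℂ} (hz : z ∈ ES R) {h : ℂ → ℂ} {C : ℝ}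
    (hC : ∀ w ∈ ES R, ‖h w‖ ≤ C) :
    ‖∫ s in Ici (1:ℝ), ker b z s * h ((s:ℂ)*z)‖ ≤ |b| / R * C := by
  have hb : ∀ᵐ s ∂(volume.restrict (Ici (1:ℝ))),
      ‖ker b z s * h ((s:ℂ)*z)‖ ≤ |b| / R * C * (s^2)⁻¹ := by
    rw [ae_restrict_iff' measurableSet_Ici]
    apply ae_of_all
    intro s hs
    rw [norm_mul]
    calc ‖ker b z s‖ * ‖h ((s:ℂ)*z)‖ ≤ (|b| / R * (s^2)⁻¹) * C :=
          mul_le_mul (norm_ker_le hR0 hz hs) (hC _ (mem_ES_smul hR0 hz hs)) (norm_nonneg _)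
            (by positivity)
      _ = |b| / R * C * (s^2)⁻¹ := by ring
  calc ‖∫ s in Ici (1:ℝ), ker b z s * h ((s:ℂ)*z)‖
      ≤ ∫ s in Ici (1:ℝ), |b| / R * C * (s^2)⁻¹ :=
        norm_integral_le_of_norm_le (integrableOn_inv_sq.const_mul _) hb
    _ = |b| / R * C * ∫ s in Ici (1:ℝ), (s^2)⁻¹ := integral_const_mul _ _
    _ = |b| / R * C := by rw [integral_inv_sq]; ring
lemma repr_integral (hR0 : 0 < R) {z : ℂ} (hz : z ∈ ES R) {h : ℂ → ℂ} {C : ℝ}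
    (hcont : ContinuousOn h (ES R)) (hC : ∀ w ∈ ES R, ‖h w‖ ≤ C) :
    (∫ t in Ici (1:ℝ), (Complex.exp (2*(t:ℂ)*z) * (∫ s in Ici t, cf b z h s)) * z)
      = ∫ s in Ici (1:ℝ), ker b z s * h ((s:ℂ)*z) := by
  have hx : 0 < z.re := hz.1
  have hz0 : z ≠ 0 := ES_ne_zero hR0 hz
  have habs : 0 < ‖z‖ := lt_trans hR0 hz.2
  have hC0 : 0 ≤ C := le_trans (norm_nonneg _) (hC z hz)
  set q : ℝ × ℝ → ℂ :=
    fun p => if p.1 ≤ p.2 then Complex.exp (2*(p.1:ℂ)*z) * (cf b z h p.2 * z) else 0 with hq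
  have hcfint : IntegrableOn (cf b z h) (Ici 1) := integrableOn_cf hR0 hz hcont hC
  -- measurability of q
  have hqeq : q = Set.indicator {p : ℝ × ℝ | p.1 ≤ p.2}
      (fun p => Complex.exp (2*(p.1:ℂ)*z) * (cf b z h p.2 * z)) := by
    funext p
    by_cases hp : p.1 ≤ p.2 <;> simp [hq, Set.indicator, hp]
  have hψ : ContinuousOn (fun p : ℝ × ℝ => Complex.exp (2*(p.1:ℂ)*z) * (cf b z h p.2 * z))
      ((Ici 1) ×ˢ (Ici 1)) := by
    apply ContinuousOn.mul
    · exact (Complex.continuous_exp.comp ((continuous_const.mul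
        (Complex.continuous_ofReal.comp continuous_fst)).mul continuous_const)).continuousOn
    · exact (ContinuousOn.comp (contOn_cf hR0 hz hcont) continuous_snd.continuousOn
        (fun p hp => hp.2)).mul continuousOn_const
  have hqm : AEStronglyMeasurable q
      ((volume.restrict (Ici 1)).prod (volume.restrict (Ici (1:ℝ)))) := by
    rw [hqeq]
    apply AEStronglyMeasurable.indicator _ (measurableSet_le measurable_fst measurable_snd)
    rw [Measure.prod_restrict]
    exact hψ.aestronglyMeasurable (measurableSet_Ici.prod measurableSet_Ici)
  -- integrability of q on the product
  have hq_fst : ∀ t : ℝ, t ∈ Ici (1:ℝ) → Integrable (fun s => q (t, s))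
      (volume.restrict (Ici (1:ℝ))) := by
    intro t ht
    have he : (fun s => q (t, s)) = (Ici t).indicator
        (fun s => Complex.exp (2*(t:ℂ)*z) * (cf b z h s * z)) := by
      funext s
      by_cases hts : t ≤ s <;> simp [hq, Set.indicator, hts]
    rw [he]
    apply Integrable.restrict
    apply IntegrableOn.integrable_indicator _ measurableSet_Ici
    exact (((hcfint.mono_set (Ici_subset_Ici.mpr ht)).mul_const z).const_mul _)
  have hqint : Integrable (fun p : ℝ × ℝ => q p)
      ((volume.restrict (Ici 1)).prod (volume.restrict (Ici (1:ℝ)))) := by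
    rw [integrable_prod_iff hqm]
    constructor
    · rw [ae_restrict_iff' measurableSet_Ici]
      exact ae_of_all _ hq_fst
    · -- integrable of t ↦ ∫ s, ‖q (t,s)‖
      set K := |b| * C / R * ‖z‖ with hK
      have hK0 : 0 ≤ K := by positivity
      apply Integrable.mono' (g := fun t => K / (2*z.re) * (t^2)⁻¹)
        ((integrableOn_inv_sq.const_mul _))
        (hqm.norm.integral_prod_right')
      rw [ae_restrict_iff' measurableSet_Ici]
      apply ae_of_all
      intro t ht
      have ht0 : (0:ℝ) < t := lt_of_lt_of_le one_pos ht
      have hnn : 0 ≤ ∫ s in Ici (1:ℝ), ‖q (t, s)‖ :=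
        integral_nonneg (fun s => norm_nonneg _)
      rw [Real.norm_eq_abs, _root_.abs_of_nonneg hnn]
      -- dominating function for the inner integral
      have hexp_eq : ∀ u : ℝ, Real.exp (-(2*z.re)*u) = Real.exp (-(2*z.re*u)) := by
        intro u; ring_nf
      set D : ℝ → ℝ := (Ici t).indicator
        (fun s => (K * Real.exp (2*z.re*t) * (t^2)⁻¹) * Real.exp (-(2*z.re*s))) with hD
      have hDint : Integrable D (volume.restrict (Ici (1:ℝ))) := by
        apply Integrable.restrict
        apply IntegrableOn.integrable_indicator _ measurableSet_Ici
        have h0 : IntegrableOn (fun s : ℝ => Real.exp (-(2*z.re*s))) (Ici t) := by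
          rw [integrableOn_Ici_iff_integrableOn_Ioi]
          apply (exp_neg_integrableOn_Ioi t (show 0 < 2*z.re by linarith)).congr_fun _
            measurableSet_Ioi
          intro x _
          simp only
          ring_nf
        exact h0.const_mul _
      have hle : ∀ s ∈ Ici (1:ℝ), ‖q (t, s)‖ ≤ D s := by
        intro s hs
        by_cases hts : t ≤ s
        · have h1 : ‖q (t,s)‖ = Real.exp (2*z.re*t) * (‖cf b z h s‖ * ‖z‖) := by
            simp only [hq, if_pos hts, norm_mul, Complex.norm_exp]
            congr 2
            · congr 1
              simp [Complex.mul_re]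
              ring
          rw [h1, hD, Set.indicator_of_mem (mem_Ici.mpr hts)]
          have h2 : ‖cf b z h s‖ ≤ |b| * C / R * (Real.exp (-(2*z.re)*s) * (s^2)⁻¹) :=
            norm_cf_le hR0 hz hC hs
          have h3 : (s^2)⁻¹ ≤ (t^2)⁻¹ := by
            apply inv_anti₀ (by positivity)
            nlinarith [mem_Ici.mp hs]
          calc Real.exp (2*z.re*t) * (‖cf b z h s‖ * ‖z‖)
              ≤ Real.exp (2*z.re*t) * ((|b| * C / R * (Real.exp (-(2*z.re)*s) * (s^2)⁻¹))
                  * ‖z‖) := by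
                apply mul_le_mul_of_nonneg_left _ (Real.exp_pos _).le
                exact mul_le_mul_of_nonneg_right h2 habs.le
            _ ≤ Real.exp (2*z.re*t) * ((|b| * C / R * (Real.exp (-(2*z.re)*s) * (t^2)⁻¹))
                  * ‖z‖) := by
                apply mul_le_mul_of_nonneg_left _ (Real.exp_pos _).le
                apply mul_le_mul_of_nonneg_right _ habs.le
                apply mul_le_mul_of_nonneg_left _ (by positivity)
                exact mul_le_mul_of_nonneg_left h3 (Real.exp_pos _).le
            _ = (K * Real.exp (2*z.re*t) * (t^2)⁻¹) * Real.exp (-(2*z.re*s)) := by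
                rw [hK, hexp_eq]; ring
        · rw [hq]
          simp only [if_neg hts]
          rw [hD, Set.indicator_of_notMem (fun hmem => hts (mem_Ici.mp hmem))]
          simp
      calc (∫ s in Ici (1:ℝ), ‖q (t, s)‖) ≤ ∫ s in Ici (1:ℝ), D s := by
            apply setIntegral_mono_on ((hq_fst t ht).norm) hDint measurableSet_Ici hle
        _ = K / (2*z.re) * (t^2)⁻¹ := by
            rw [hD, integral_indicator measurableSet_Ici,
              Measure.restrict_restrict measurableSet_Ici, Ici_inter_Ici, max_eq_left ht,
              integral_const_mul, MeasureTheory.integral_Ici_eq_integral_Ioi,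
              integral_exp_neg_mul_Ioi (show 0 < 2*z.re by linarith)]
            rw [Real.exp_neg]
            have hepos : (0:ℝ) < Real.exp (2*z.re*t) := Real.exp_pos _
            field_simp
  -- Step 1: rewrite LHS as iterated integral of q
  have step1 : (∫ t in Ici (1:ℝ), (Complex.exp (2*(t:ℂ)*z) * (∫ s in Ici t, cf b z h s)) * z)
      = ∫ t in Ici (1:ℝ), ∫ s in Ici (1:ℝ), q (t, s) := by
    apply setIntegral_congr_fun measurableSet_Ici
    intro t ht
    have he : (fun s => q (t, s)) = (Ici t).indicator
        (fun s => Complex.exp (2*(t:ℂ)*z) * (cf b z h s * z)) := by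
      funext u; by_cases hts : t ≤ u <;> simp [hq, Set.indicator, hts]
    simp only
    rw [he, integral_indicator measurableSet_Ici,
      Measure.restrict_restrict measurableSet_Ici, Ici_inter_Ici, max_eq_left ht,
      MeasureTheory.integral_const_mul, MeasureTheory.integral_mul_const]
    ring
  -- Step 2: swap the order of integration
  have step2 : (∫ t in Ici (1:ℝ), ∫ s in Ici (1:ℝ), q (t, s))
      = ∫ s in Ici (1:ℝ), ∫ t in Ici (1:ℝ), q (t, s) :=
    integral_integral_swap hqint
  -- Step 3: compute the inner integral over t
  have step3 : ∀ s ∈ Ici (1:ℝ), (∫ t in Ici (1:ℝ), q (t, s)) = ker b z s * h ((s:ℂ)*z) := by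
    intro s hs
    have hs0 : (0:ℝ) < s := lt_of_lt_of_le one_pos hs
    have he : (fun t => q (t, s)) = (Iic s).indicator
        (fun t => Complex.exp (2*(t:ℂ)*z) * (cf b z h s * z)) := by
      funext u; by_cases hts : u ≤ s <;> simp [hq, Set.indicator, hts]
    rw [he, integral_indicator measurableSet_Iic,
      Measure.restrict_restrict measurableSet_Iic, Set.inter_comm, Set.Ici_inter_Iic,
      MeasureTheory.integral_mul_const, MeasureTheory.integral_Icc_eq_integral_Ioc,
      ← intervalIntegral.integral_of_le (mem_Ici.mp hs)]
    have hca : ∀ t : ℝ, Complex.exp (2*(t:ℂ)*z) = Complex.exp ((2*z)*(t:ℂ)) := by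
      intro t; congr 1; ring
    simp only [hca]
    rw [integral_exp_mul_complex (mul_ne_zero two_ne_zero hz0)]
    unfold ker cf
    have hsne : ((s:ℂ)) ≠ 0 := by exact_mod_cast hs0.ne'
    have h1 : Complex.exp (-2*(s:ℂ)*z) = (Complex.exp (2*z*(s:ℂ)))⁻¹ := by
      rw [← Complex.exp_neg]; congr 1; ring
    have h2 : Complex.exp (2*z*(1-(s:ℂ))) = Complex.exp (2*z) / Complex.exp (2*z*(s:ℂ)) := by
      rw [← Complex.exp_sub]; congr 1; ring
    rw [h1, h2]
    have he1 : Complex.exp (2*z*(s:ℂ)) ≠ 0 := Complex.exp_ne_zero _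
    have he2 : Complex.exp (2*z) ≠ 0 := Complex.exp_ne_zero _
    field_simp [hsne, hz0, he1, he2]
    push_cast
    ring
  rw [step1, step2]
  exact setIntegral_congr_fun measurableSet_Ici step3

lemma norm_F_le (hR0 : 0 < R) {z : ℂ} (hz : z ∈ ES R) {h : ℂ → ℂ} {C : ℝ}
    (hC : ∀ w ∈ ES R, ‖h w‖ ≤ C) {s : ℝ} (hs : 1 ≤ s) :
    ‖ker b z s * h ((s:ℂ)*z)‖ ≤ |b| / R * C * (s^2)⁻¹ := by
  rw [norm_mul]
  calc ‖ker b z s‖ * ‖h ((s:ℂ)*z)‖ ≤ (|b| / R * (s^2)⁻¹) * C :=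
        mul_le_mul (norm_ker_le hR0 hz hs) (hC _ (mem_ES_smul hR0 hz hs)) (norm_nonneg _)
          (by positivity)
    _ = |b| / R * C * (s^2)⁻¹ := by ring
lemma diffAt_F (hR0 : 0 < R) {h : ℂ → ℂ} (hd : DifferentiableOn ℂ h (ES R))
    {s : ℝ} (hs : 1 ≤ s) {z : ℂ} (hz : z ∈ ES R) :
    DifferentiableAt ℂ (fun w => ker b w s * h ((s:ℂ)*w)) z := by
  have hs0 : (0:ℝ) < s := lt_of_lt_of_le one_pos hs
  have hsne : ((s:ℂ)) ≠ 0 := by exact_mod_cast hs0.ne'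
  have hne : 2 * (s:ℂ)^2 * z ≠ 0 :=
    mul_ne_zero (mul_ne_zero two_ne_zero (pow_ne_zero 2 hsne)) (ES_ne_zero hR0 hz)
  apply DifferentiableAt.mul
  · unfold ker
    apply DifferentiableAt.mul
    · exact (differentiableAt_const _).div
        ((differentiableAt_id.const_mul (2 * (s:ℂ)^2))) hne
    · exact (differentiableAt_const _).sub
        (((differentiableAt_id.const_mul (2:ℂ)).mul_const (1-(s:ℂ))).cexp)
  · exact (hd.differentiableAt ((isOpen_ES R).mem_nhds (mem_ES_smul hR0 hz hs))).comp z
      (differentiableAt_id.const_mul ((s:ℂ)))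

lemma diffAt_integral (hR0 : 0 < R) {z₀ : ℂ} (hz₀ : z₀ ∈ ES R) {h : ℂ → ℂ} {C : ℝ}
    (hd : DifferentiableOn ℂ h (ES R)) (hC : ∀ w ∈ ES R, ‖h w‖ ≤ C) :
    DifferentiableAt ℂ (fun z => ∫ s in Ici (1:ℝ), ker b z s * h ((s:ℂ)*z)) z₀ := by
  obtain ⟨r, hr0, hrsub⟩ := Metric.isOpen_iff.mp (isOpen_ES R) z₀ hz₀
  set ε := r/4 with hεdef
  have hε : 0 < ε := by positivity
  have hball2 : closedBall z₀ (2*ε) ⊆ ES R := by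
    intro w hw
    apply hrsub
    rw [mem_closedBall] at hw
    rw [mem_ball]
    calc dist w z₀ ≤ 2*ε := hw
      _ < r := by rw [hεdef]; linarith
  have hballE : ball z₀ ε ⊆ ES R :=
    (ball_subset_closedBall.trans (closedBall_subset_closedBall (by linarith))).trans hball2
  set F : ℂ → ℝ → ℂ := fun z s => ker b z s * h ((s:ℂ)*z) with hF
  set F' : ℂ → ℝ → ℂ := fun z s => deriv (fun w => F w s) z with hF'
  have hcont : ContinuousOn h (ES R) := hd.continuousOn
  -- measurability of F z for z near z₀
  have hF_meas : ∀ᶠ z in 𝓝 z₀, AEStronglyMeasurable (F z) (volume.restrict (Ici (1:ℝ))) := by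
    filter_upwards [ball_mem_nhds z₀ hε] with z hzb
    exact (contOn_ker_mul hR0 (hballE hzb) hcont).aestronglyMeasurable measurableSet_Ici
  have hF_int : Integrable (F z₀) (volume.restrict (Ici (1:ℝ))) :=
    integrableOn_ker_mul hR0 hz₀ hcont hC
  -- differentiability on the closed ball
  have hdiff_cb : ∀ s ∈ Ici (1:ℝ), ∀ z ∈ closedBall z₀ (2*ε),
      DifferentiableAt ℂ (fun w => F w s) z :=
    fun s hs z hzb => diffAt_F hR0 hd hs (hball2 hzb)
  -- measurability of F' z₀ via limit of slopes
  have hF'_meas : AEStronglyMeasurable (F' z₀) (volume.restrict (Ici (1:ℝ))) := by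
    have hmemn : ∀ n : ℕ, z₀ + (((n:ℝ)+1)⁻¹ : ℝ) ∈ ES R :=
      fun n => mem_ES_add_real hR0 hz₀ (by positivity)
    apply aestronglyMeasurable_of_tendsto_ae (u := (atTop : Filter ℕ))
      (f := fun n s => ((((n:ℝ)+1)⁻¹ : ℂ))⁻¹ * (F (z₀ + (((n:ℝ)+1)⁻¹ : ℝ)) s - F z₀ s))
    · intro n
      apply AEStronglyMeasurable.const_mul
      apply AEStronglyMeasurable.sub
      · exact (contOn_ker_mul hR0 (hmemn n) hcont).aestronglyMeasurable measurableSet_Ici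
      · exact (contOn_ker_mul hR0 hz₀ hcont).aestronglyMeasurable measurableSet_Ici
    · rw [ae_restrict_iff' measurableSet_Ici]
      apply ae_of_all
      intro s hs
      have hder : HasDerivAt (fun w => F w s) (F' z₀ s) z₀ :=
        (hdiff_cb s hs z₀ (mem_closedBall_self (by positivity))).hasDerivAt
      have hslope := hasDerivAt_iff_tendsto_slope.mp hder
      have hseq : Tendsto (fun n : ℕ => z₀ + ((((n:ℝ)+1)⁻¹ : ℝ) : ℂ)) atTop (𝓝[≠] z₀) := by
        rw [tendsto_nhdsWithin_iff]
        constructor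
        · have h1 : Tendsto (fun n : ℕ => ((n:ℝ)+1)⁻¹) atTop (𝓝 0) := by
            simpa using tendsto_one_div_add_atTop_nhds_zero_nat (𝕜 := ℝ)
          have h2 : Tendsto (fun n : ℕ => ((((n:ℝ)+1)⁻¹ : ℝ) : ℂ)) atTop (𝓝 0) := by
            have h3 := (Complex.continuous_ofReal.tendsto 0).comp h1
            simpa [Function.comp_def] using h3
          simpa using tendsto_const_nhds.add h2
        · apply Eventually.of_forall
          intro n
          simp only [mem_compl_iff, mem_singleton_iff]
          intro hcontra
          have : ((((n:ℝ)+1)⁻¹ : ℝ) : ℂ) = 0 := by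
            have := congrArg (fun w => w - z₀) hcontra
            simpa using this
          rw [Complex.ofReal_eq_zero] at this
          have : ((n:ℝ)+1)⁻¹ ≠ 0 := by positivity
          simp_all
      refine (hslope.comp hseq).congr (fun n => ?_)
      show slope (fun w => F w s) z₀ (z₀ + ((((n:ℝ)+1)⁻¹ : ℝ) : ℂ)) = _
      rw [slope_def_field, add_sub_cancel_left, div_eq_inv_mul]
      push_cast
      ring
  -- uniform bound on the derivative via Cauchy estimates
  have h_bound : ∀ᵐ s ∂(volume.restrict (Ici (1:ℝ))), ∀ z ∈ ball z₀ ε,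
      ‖F' z s‖ ≤ (|b| / R * C / ε) * (s^2)⁻¹ := by
    rw [ae_restrict_iff' measurableSet_Ici]
    apply ae_of_all
    intro s hs z hzb
    have hsub : closedBall z ε ⊆ closedBall z₀ (2*ε) := by
      intro w hw
      rw [mem_closedBall] at hw ⊢
      calc dist w z₀ ≤ dist w z + dist z z₀ := dist_triangle _ _ _
        _ ≤ ε + ε := add_le_add hw (le_of_lt (mem_ball.mp hzb))
        _ = 2*ε := by ring
    have hdco : DiffContOnCl ℂ (fun w => F w s) (ball z ε) := by
      apply DifferentiableOn.diffContOnCl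
      rw [closure_ball z hε.ne']
      exact fun w hw => (hdiff_cb s hs w (hsub hw)).differentiableWithinAt
    have hsph : ∀ w ∈ sphere z ε, ‖F w s‖ ≤ |b| / R * C * (s^2)⁻¹ := by
      intro w hw
      exact norm_F_le hR0 (hball2 (hsub (sphere_subset_closedBall hw))) hC hs
    have := Complex.norm_deriv_le_of_forall_mem_sphere_norm_le hε hdco hsph
    calc ‖F' z s‖ ≤ (|b| / R * C * (s^2)⁻¹) / ε := this
      _ = (|b| / R * C / ε) * (s^2)⁻¹ := by ring
  have bound_int : Integrable (fun s : ℝ => (|b| / R * C / ε) * (s^2)⁻¹)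
      (volume.restrict (Ici (1:ℝ))) := integrableOn_inv_sq.const_mul _
  have h_diff : ∀ᵐ s ∂(volume.restrict (Ici (1:ℝ))), ∀ z ∈ ball z₀ ε,
      HasDerivAt (fun w => F w s) (F' z s) z := by
    rw [ae_restrict_iff' measurableSet_Ici]
    apply ae_of_all
    intro s hs z hzb
    exact (hdiff_cb s hs z (ball_subset_closedBall.trans
      (closedBall_subset_closedBall (by linarith)) hzb)).hasDerivAt
  have key := hasDerivAt_integral_of_dominated_loc_of_deriv_le (ball_mem_nhds z₀ hε) hF_meas hF_int hF'_meas
    h_bound bound_int h_diff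
  exact key.2.differentiableAt

end Stmt3Aux

set_option maxHeartbeats 1000000 in
open Stmt3Aux in
/-- The fixed-point map `T` on the space of bounded holomorphic functions on
`E_R = {Re z > 0, |z| > R}` (with `R ≥ 2|b|`) given by
`(Th)(z) = 1 + ∫_{Γ_z} e^{2ξ} (∫_{Γ_ξ} b e^{-2η} η⁻² h(η) dη) dξ`
(rays parametrized by `ξ = tz`, `η = sz`) is well defined, is a contraction with
Lipschitz constant `|b|/R ≤ 1/2`, and has a unique fixed point `h₀` with `‖h₀ - 1‖ ≤ 1`. -/
theorem stmt3 (b : ℝ) (R : ℝ) (hR0 : 0 < R) (hR : 2 * |b| ≤ R) :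
    let E : Set ℂ := {z | 0 < z.re ∧ R < ‖z‖}
    let T : (ℂ → ℂ) → (ℂ → ℂ) := fun h z =>
      1 + ∫ t in Set.Ici (1:ℝ), (Complex.exp (2*t*z) *
            (∫ s in Set.Ici t,
              ((b : ℂ) * Complex.exp (-2*s*z) / (s*z)^2 * h (s*z)) * z)) * z
    -- `T` maps bounded holomorphic functions on `E` to bounded holomorphic functions on `E`
    (∀ h : ℂ → ℂ, DifferentiableOn ℂ h E → (∃ C, ∀ z ∈ E, ‖h z‖ ≤ C) →
        DifferentiableOn ℂ (T h) E ∧ ∃ C, ∀ z ∈ E, ‖T h z‖ ≤ C) ∧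
    -- `T` is Lipschitz with constant `|b|/R`
    (∀ h₁ h₂ : ℂ → ℂ, DifferentiableOn ℂ h₁ E → (∃ C, ∀ z ∈ E, ‖h₁ z‖ ≤ C) →
        DifferentiableOn ℂ h₂ E → (∃ C, ∀ z ∈ E, ‖h₂ z‖ ≤ C) →
        ∀ C : ℝ, (∀ z ∈ E, ‖h₁ z - h₂ z‖ ≤ C) →
        ∀ z ∈ E, ‖T h₁ z - T h₂ z‖ ≤ (|b| / R) * C) ∧
    |b| / R ≤ 1/2 ∧
    -- existence and uniqueness of the fixed point, with `‖h₀ - 1‖ ≤ 1`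
    (∃ h₀ : ℂ → ℂ, DifferentiableOn ℂ h₀ E ∧ (∃ C, ∀ z ∈ E, ‖h₀ z‖ ≤ C) ∧
      (∀ z ∈ E, T h₀ z = h₀ z) ∧ (∀ z ∈ E, ‖h₀ z - 1‖ ≤ 1) ∧
      ∀ h₁ : ℂ → ℂ, DifferentiableOn ℂ h₁ E → (∃ C, ∀ z ∈ E, ‖h₁ z‖ ≤ C) →
        (∀ z ∈ E, T h₁ z = h₁ z) → ∀ z ∈ E, h₁ z = h₀ z) := by
  intro E T
  have hEES : E = ES R := rfl
  set q := |b| / R with hqdef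
  have hq0 : 0 ≤ q := by positivity
  have hq2 : q ≤ 1/2 := by
    rw [hqdef, div_le_iff₀ hR0]
    linarith
  have hq1 : q < 1 := lt_of_le_of_lt hq2 (by norm_num)
  -- representation of T on E
  have hrepr : ∀ (h : ℂ → ℂ), ContinuousOn h (ES R) → ∀ C : ℝ, (∀ w ∈ ES R, ‖h w‖ ≤ C) →
      ∀ z ∈ ES R, T h z = 1 + ∫ s in Set.Ici (1:ℝ), ker b z s * h ((s:ℂ)*z) := by
    intro h hcont C hC z hz
    have hre := repr_integral (b := b) (R := R) hR0 hz hcont hC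
    calc T h z
        = 1 + ∫ t in Set.Ici (1:ℝ),
            (Complex.exp (2*(t:ℂ)*z) * (∫ s in Set.Ici t, cf b z h s)) * z := rfl
      _ = 1 + ∫ s in Set.Ici (1:ℝ), ker b z s * h ((s:ℂ)*z) := by rw [hre]
  -- Lipschitz property
  have hlip : ∀ h₁ h₂ : ℂ → ℂ, ContinuousOn h₁ (ES R) → (∃ C, ∀ z ∈ ES R, ‖h₁ z‖ ≤ C) →
      ContinuousOn h₂ (ES R) → (∃ C, ∀ z ∈ ES R, ‖h₂ z‖ ≤ C) →
      ∀ C : ℝ, (∀ z ∈ ES R, ‖h₁ z - h₂ z‖ ≤ C) →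
      ∀ z ∈ ES R, ‖T h₁ z - T h₂ z‖ ≤ q * C := by
    intro h₁ h₂ hc₁ ⟨C₁, hC₁⟩ hc₂ ⟨C₂, hC₂⟩ C hC z hz
    have e1 : T h₁ z - T h₂ z
        = ∫ s in Set.Ici (1:ℝ), ker b z s * ((fun w => h₁ w - h₂ w) ((s:ℂ)*z)) := by
      rw [hrepr h₁ hc₁ C₁ hC₁ z hz, hrepr h₂ hc₂ C₂ hC₂ z hz]
      have e2 : (1:ℂ) + (∫ s in Set.Ici (1:ℝ), ker b z s * h₁ ((s:ℂ)*z))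
          - (1 + ∫ s in Set.Ici (1:ℝ), ker b z s * h₂ ((s:ℂ)*z))
          = (∫ s in Set.Ici (1:ℝ), ker b z s * h₁ ((s:ℂ)*z))
            - ∫ s in Set.Ici (1:ℝ), ker b z s * h₂ ((s:ℂ)*z) := by ring
      rw [e2, ← integral_sub (integrableOn_ker_mul hR0 hz hc₁ hC₁)
        (integrableOn_ker_mul hR0 hz hc₂ hC₂)]
      apply setIntegral_congr_fun measurableSet_Ici
      intro s hs
      simp only
      ring
    rw [e1]
    exact norm_integral_ker_mul_le (b := b) (R := R) (h := fun w => h₁ w - h₂ w) (C := C)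
      hR0 hz hC
  -- part 1 : T maps the space into itself
  have hpart1 : ∀ h : ℂ → ℂ, DifferentiableOn ℂ h E → (∃ C, ∀ z ∈ E, ‖h z‖ ≤ C) →
      DifferentiableOn ℂ (T h) E ∧ ∃ C, ∀ z ∈ E, ‖T h z‖ ≤ C := by
    intro h hd ⟨C, hC⟩
    have hC' : ∀ w ∈ ES R, ‖h w‖ ≤ max C 0 := fun w hw => (hC w hw).trans (le_max_left _ _)
    constructor
    · intro z hz
      have hg : DifferentiableAt ℂ
          (fun w => (1:ℂ) + ∫ s in Set.Ici (1:ℝ), ker b w s * h ((s:ℂ)*w)) z :=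
        (differentiableAt_const _).add (diffAt_integral hR0 hz hd hC')
      have heq : T h =ᶠ[𝓝 z] fun w => (1:ℂ) + ∫ s in Set.Ici (1:ℝ), ker b w s * h ((s:ℂ)*w) :=
        Filter.eventuallyEq_of_mem ((isOpen_ES R).mem_nhds hz)
          (fun w hw => hrepr h hd.continuousOn (max C 0) hC' w hw)
      exact (heq.differentiableAt_iff.mpr hg).differentiableWithinAt
    · refine ⟨1 + q * max C 0, fun z hz => ?_⟩
      rw [hrepr h hd.continuousOn (max C 0) hC' z hz]
      calc ‖(1:ℂ) + ∫ s in Set.Ici (1:ℝ), ker b z s * h ((s:ℂ)*z)‖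
          ≤ ‖(1:ℂ)‖ + ‖∫ s in Set.Ici (1:ℝ), ker b z s * h ((s:ℂ)*z)‖ := norm_add_le _ _
        _ ≤ 1 + q * max C 0 := by
            rw [norm_one]
            exact add_le_add le_rfl (norm_integral_ker_mul_le hR0 hz hC')
  refine ⟨hpart1, ?_, hq2, ?_⟩
  · -- part 2 : Lipschitz
    intro h₁ h₂ hd₁ hb₁ hd₂ hb₂ C hC z hz
    exact hlip h₁ h₂ hd₁.continuousOn hb₁ hd₂.continuousOn hb₂ C hC z hz
  · -- part 4 : fixed point
    set seq : ℕ → ℂ → ℂ := fun n => Nat.rec (motive := fun _ => ℂ → ℂ)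
      (fun _ => (1:ℂ)) (fun _ ih => T ih) n with hseq
    have hseq0 : seq 0 = fun _ => (1:ℂ) := rfl
    have hseqS : ∀ n, seq (n+1) = T (seq n) := fun n => rfl
    have hT0 : ∀ z : ℂ, T (fun _ => (0:ℂ)) z = 1 := by
      intro z
      show (1:ℂ) + _ = 1
      simp
    have hgood : ∀ n, DifferentiableOn ℂ (seq n) E ∧ ∃ C, ∀ z ∈ E, ‖seq n z‖ ≤ C := by
      intro n
      induction n with
      | zero =>
        refine ⟨?_, ⟨1, fun z _ => by simp [hseq0]⟩⟩
        rw [hseq0]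
        exact (differentiable_const _).differentiableOn
      | succ n ih => exact hpart1 (seq n) ih.1 ih.2
    have hstep : ∀ n, ∀ z ∈ ES R, ‖seq (n+1) z - seq n z‖ ≤ q^(n+1) := by
      intro n
      induction n with
      | zero =>
        intro z hz
        have h0 : ‖T (seq 0) z - T (fun _ => (0:ℂ)) z‖ ≤ q * 1 := by
          apply hlip (seq 0) (fun _ => (0:ℂ)) (by rw [hseq0]; exact continuousOn_const)
            ⟨1, fun w _ => by simp [hseq0]⟩
            continuousOn_const ⟨0, fun w _ => by simp⟩ 1 (fun w _ => by simp [hseq0]) z hz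
        rw [hT0 z] at h0
        rw [hseqS 0]
        simpa [hseq0] using h0
      | succ n ih =>
        intro z hz
        have h0 := hlip (seq (n+1)) (seq n)
          (hgood (n+1)).1.continuousOn (hgood (n+1)).2
          (hgood n).1.continuousOn (hgood n).2 (q^(n+1)) ih z hz
        calc ‖seq (n+2) z - seq (n+1) z‖ ≤ q * q^(n+1) := h0
          _ = q^(n+2) := by ring
    have htail : ∀ n k, ∀ z ∈ ES R,
        ‖seq (n+k) z - seq n z‖ ≤ q^(n+1) * (2 - 2 * (1/2:ℝ)^k) := by
      intro n k
      induction k with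
      | zero => intro z _; simp
      | succ k ih =>
        intro z hz
        have h1 : ‖seq (n+(k+1)) z - seq n z‖
            ≤ ‖seq (n+k+1) z - seq (n+k) z‖ + ‖seq (n+k) z - seq n z‖ := by
          rw [show n+(k+1) = n+k+1 by ring]
          exact norm_sub_le_norm_sub_add_norm_sub _ _ _
        have h2 : ‖seq (n+k+1) z - seq (n+k) z‖ ≤ q^(n+k+1) := hstep (n+k) z hz
        have h3 : q^(n+k+1) ≤ q^(n+1) * (1/2:ℝ)^k := by
          have e1 : q^(n+k+1) = q^(n+1) * q^k := by ring
          rw [e1]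
          exact mul_le_mul_of_nonneg_left (pow_le_pow_left₀ hq0 hq2 k) (by positivity)
        have h4 := ih z hz
        have h5 : ((1:ℝ)/2)^(k+1) = (1/2) * (1/2:ℝ)^k := by ring
        have h6 : (0:ℝ) ≤ q^(n+1) := by positivity
        calc ‖seq (n+(k+1)) z - seq n z‖
            ≤ q^(n+k+1) + q^(n+1) * (2 - 2 * (1/2:ℝ)^k) := by linarith
          _ ≤ q^(n+1) * (1/2:ℝ)^k + q^(n+1) * (2 - 2 * (1/2:ℝ)^k) := by linarith
          _ = q^(n+1) * (2 - 2 * (1/2:ℝ)^(k+1)) := by rw [h5]; ring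
    have htail' : ∀ n k, ∀ z ∈ ES R, ‖seq (n+k) z - seq n z‖ ≤ 2 * q^(n+1) := by
      intro n k z hz
      refine (htail n k z hz).trans ?_
      have h1 : (0:ℝ) ≤ (1/2:ℝ)^k := by positivity
      have h6 : (0:ℝ) ≤ q^(n+1) := by positivity
      nlinarith
    -- the limit function
    set h₀ : ℂ → ℂ := fun z => limUnder atTop (fun n => seq n z) with hh₀
    have hlim : ∀ z ∈ ES R, Filter.Tendsto (fun n => seq n z) atTop (𝓝 (h₀ z)) := by
      intro z hz
      have hc : CauchySeq (fun n => seq n z) := by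
        apply cauchySeq_of_le_geometric q q hq1
        intro n
        rw [dist_eq_norm]
        calc ‖seq n z - seq (n+1) z‖ = ‖seq (n+1) z - seq n z‖ := norm_sub_rev _ _
          _ ≤ q^(n+1) := hstep n z hz
          _ = q * q^n := by ring
      obtain ⟨l, hl⟩ := cauchySeq_tendsto_of_complete hc
      have he : h₀ z = l := hl.limUnder_eq
      rw [he]
      exact hl
    have hdist : ∀ n, ∀ z ∈ ES R, ‖h₀ z - seq n z‖ ≤ 2 * q^(n+1) := by
      intro n z hz
      have h1 : Filter.Tendsto (fun k => ‖seq (n+k) z - seq n z‖) atTop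
          (𝓝 ‖h₀ z - seq n z‖) := by
        have hkn : Filter.Tendsto (fun k : ℕ => n + k) atTop atTop :=
          tendsto_atTop_atTop_of_monotone (fun _ _ h => by omega) (fun m => ⟨m, by omega⟩)
        have h2 : Filter.Tendsto (fun k => seq (n+k) z) atTop (𝓝 (h₀ z)) :=
          (hlim z hz).comp hkn
        exact (h2.sub tendsto_const_nhds).norm
      exact le_of_tendsto h1 (Filter.Eventually.of_forall fun k => htail' n k z hz)
    have h2q : ∀ n : ℕ, Filter.Tendsto (fun n : ℕ => 2 * q^(n+1)) atTop (𝓝 0) := by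
      intro _
      have h1 := tendsto_pow_atTop_nhds_zero_of_lt_one hq0 hq1
      have h2 := h1.const_mul (2*q)
      rw [mul_zero] at h2
      apply h2.congr
      intro n
      ring
    have huni : TendstoUniformlyOn (fun n z => seq n z) h₀ atTop (ES R) := by
      rw [Metric.tendstoUniformlyOn_iff]
      intro δ hδ
      have h3 := (h2q 0).eventually_lt_const hδ
      filter_upwards [h3] with n hn z hz
      rw [dist_eq_norm]
      exact lt_of_le_of_lt (hdist n z hz) hn
    have hd₀ : DifferentiableOn ℂ h₀ (ES R) :=
      (huni.tendstoLocallyUniformlyOn).differentiableOn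
        (Filter.Eventually.of_forall fun n => (hgood n).1) (isOpen_ES R)
    have hb₀ : ∀ z ∈ ES R, ‖h₀ z‖ ≤ 2*q + 1 := by
      intro z hz
      calc ‖h₀ z‖ = ‖(h₀ z - seq 0 z) + seq 0 z‖ := by ring_nf
        _ ≤ ‖h₀ z - seq 0 z‖ + ‖seq 0 z‖ := norm_add_le _ _
        _ ≤ 2*q^(0+1) + 1 := by
            apply add_le_add (hdist 0 z hz)
            simp [hseq0]
        _ = 2*q + 1 := by ring
    have hfix : ∀ z ∈ ES R, T h₀ z = h₀ z := by
      intro z hz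
      have key : ∀ n : ℕ, ‖T h₀ z - h₀ z‖ ≤ 4 * q^(n+1) := by
        intro n
        have h1 : ‖T h₀ z - T (seq n) z‖ ≤ q * (2 * q^(n+1)) :=
          hlip h₀ (seq n) hd₀.continuousOn ⟨2*q+1, hb₀⟩ (hgood n).1.continuousOn (hgood n).2
            (2*q^(n+1)) (hdist n) z hz
        have h2 : ‖seq (n+1) z - h₀ z‖ ≤ 2 * q^(n+1) := by
          rw [norm_sub_rev]
          refine (hdist (n+1) z hz).trans ?_
          have : q^(n+2) ≤ q^(n+1) := pow_le_pow_of_le_one hq0 hq1.le (by omega)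
          linarith
        calc ‖T h₀ z - h₀ z‖ ≤ ‖T h₀ z - seq (n+1) z‖ + ‖seq (n+1) z - h₀ z‖ :=
              norm_sub_le_norm_sub_add_norm_sub _ _ _
          _ ≤ q * (2 * q^(n+1)) + 2 * q^(n+1) := by
              rw [hseqS n]
              exact add_le_add h1 h2
          _ ≤ 4 * q^(n+1) := by nlinarith [pow_nonneg hq0 (n+1)]
      have hlim0 : Filter.Tendsto (fun n : ℕ => 4 * q^(n+1)) atTop (𝓝 0) := by
        have h1 := tendsto_pow_atTop_nhds_zero_of_lt_one hq0 hq1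
        have h2 := h1.const_mul (4*q)
        rw [mul_zero] at h2
        apply h2.congr
        intro n
        ring
      have h3 : ‖T h₀ z - h₀ z‖ ≤ 0 :=
        ge_of_tendsto hlim0 (Filter.Eventually.of_forall key)
      have h4 : T h₀ z - h₀ z = 0 := by
        rwa [norm_le_zero_iff] at h3
      exact sub_eq_zero.mp h4
    have hnear : ∀ z ∈ ES R, ‖h₀ z - 1‖ ≤ 1 := by
      intro z hz
      have h1 := hdist 0 z hz
      rw [hseq0] at h1
      calc ‖h₀ z - 1‖ ≤ 2 * q^(0+1) := h1
        _ ≤ 1 := by rw [pow_one]; linarith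
    refine ⟨h₀, hd₀, ⟨2*q+1, hb₀⟩, hfix, hnear, ?_⟩
    -- uniqueness
    intro h₁ hd₁ hb₁ hfix₁ z hz
    obtain ⟨C₁, hC₁⟩ := hb₁
    set M := C₁ + (2*q+1) with hM
    have hM0 : 0 ≤ M := by
      have h1 : 0 ≤ C₁ := le_trans (norm_nonneg _) (hC₁ z hz)
      rw [hM]
      linarith
    have claim : ∀ n : ℕ, ∀ w ∈ ES R, ‖h₁ w - h₀ w‖ ≤ M * (1/2:ℝ)^n := by
      intro n
      induction n with
      | zero =>
        intro w hw
        calc ‖h₁ w - h₀ w‖ ≤ ‖h₁ w‖ + ‖h₀ w‖ := norm_sub_le _ _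
          _ ≤ C₁ + (2*q+1) := add_le_add (hC₁ w hw) (hb₀ w hw)
          _ = M * (1/2:ℝ)^0 := by rw [hM]; ring
      | succ n ih =>
        intro w hw
        have h1 : ‖T h₁ w - T h₀ w‖ ≤ q * (M * (1/2:ℝ)^n) :=
          hlip h₁ h₀ hd₁.continuousOn ⟨C₁, hC₁⟩ hd₀.continuousOn ⟨2*q+1, hb₀⟩
            (M * (1/2:ℝ)^n) ih w hw
        rw [hfix₁ w hw, hfix w hw] at h1
        calc ‖h₁ w - h₀ w‖ ≤ q * (M * (1/2:ℝ)^n) := h1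
          _ ≤ (1/2) * (M * (1/2:ℝ)^n) := by
              apply mul_le_mul_of_nonneg_right hq2 (by positivity)
          _ = M * (1/2:ℝ)^(n+1) := by ring
    have hlim0 : Filter.Tendsto (fun n : ℕ => M * (1/2:ℝ)^n) atTop (𝓝 0) := by
      have h1 := tendsto_pow_atTop_nhds_zero_of_lt_one (by norm_num : (0:ℝ) ≤ 1/2)
        (by norm_num : (1/2:ℝ) < 1)
      have h2 := h1.const_mul M
      rwa [mul_zero] at h2
    have h3 : ‖h₁ z - h₀ z‖ ≤ 0 :=
      ge_of_tendsto hlim0 (Filter.Eventually.of_forall fun n => claim n z hz)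
    have h4 : h₁ z - h₀ z = 0 := by rwa [norm_le_zero_iff] at h3
    exact sub_eq_zero.mp h4
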